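/- arXiv:2107.09315 — 2 statements merged into one kernel-verified Lean document; each statement's English description precedes it below -/
import Mathlib

section
/- Let q₁ > 0, q₂ > 0 and μ ≥ 0 be real numbers, and set λ = q₂/q₁ and Υ = [[1, −2μ], [2λ, 1]]. Then Υ is invertible, and Υ⁻¹ · [[q₁, −q₂], [q₂, 0]] equals (1/(1 + 4λμ)) · [[q₁ + 2μq₂, −q₂], [−q₂, 2λq₂]]; in particular Υ⁻¹ · [[q₁, −q₂], [q₂, 0]] is a symmetric positive definite matrix. -/
open Matrix

/-- for `q₁, q₂ > 0`, `μ ≥ 0`, `λ = q₂/q₁` and `Υ = [[1, −2μ], [2λ, 1]]`,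
the matrix `Υ` is invertible and `Υ⁻¹ · [[q₁, −q₂], [q₂, 0]]` equals
`(1/(1 + 4λμ)) · [[q₁ + 2μq₂, −q₂], [−q₂, 2λq₂]]`, a symmetric positive definite matrix. -/
theorem stmt_9 (q1 q2 μ lam : ℝ) (h1 : 0 < q1) (h2 : 0 < q2) (hμ : 0 ≤ μ)
    (hlam : lam = q2 / q1) :
    let Υ : Matrix (Fin 2) (Fin 2) ℝ := !![1, -2 * μ; 2 * lam, 1]
    IsUnit Υ ∧
    Υ⁻¹ * !![q1, -q2; q2, 0] =
      (1 / (1 + 4 * lam * μ)) • !![q1 + 2 * μ * q2, -q2; -q2, 2 * lam * q2] ∧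
    (Υ⁻¹ * !![q1, -q2; q2, 0]).PosDef := by
  intro Υ
  have hlam0 : 0 < lam := by rw [hlam]; positivity
  have hd : 0 < 1 + 4 * lam * μ := by positivity
  have hdet : Υ.det = 1 + 4 * lam * μ := by
    simp [Υ, Matrix.det_fin_two_of]; ring
  have hunit : IsUnit Υ := by
    rw [Matrix.isUnit_iff_isUnit_det, hdet]
    exact (isUnit_iff_ne_zero).2 hd.ne'
  have heq : Υ⁻¹ * !![q1, -q2; q2, 0] =
      (1 / (1 + 4 * lam * μ)) • !![q1 + 2 * μ * q2, -q2; -q2, 2 * lam * q2] := by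
    have hq : q2 = lam * q1 := by
      rw [hlam]; field_simp
    have := hunit.invertible
    rw [inv_mul_eq_iff_eq_mul_of_invertible, Matrix.mul_smul]
    ext i j
    fin_cases i <;> fin_cases j <;>
      simp [Υ, Matrix.mul_apply, Fin.sum_univ_two, hq] <;> field_simp <;> ring
  refine ⟨hunit, heq, ?_⟩
  rw [heq]
  rw [Matrix.posDef_iff_dotProduct_mulVec]
  constructor
  · ext i j
    fin_cases i <;> fin_cases j <;> simp [Matrix.IsHermitian]
  · intro x hx
    have hx' : x 0 ≠ 0 ∨ x 1 ≠ 0 := by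
      by_contra h
      push_neg at h
      exact hx (funext fun i => by fin_cases i <;> simp [h.1, h.2])
    simp only [Matrix.smul_mulVec, dotProduct, Matrix.mulVec,
      Fin.sum_univ_two, Pi.smul_apply, smul_eq_mul, Matrix.cons_val',
      Matrix.cons_val_zero, Matrix.cons_val_one, Matrix.head_cons,
      Matrix.empty_val', Matrix.cons_val_fin_one, Matrix.head_fin_const,
      RCLike.inner_apply, conj_trivial]
    have key : 0 < x 0 * ((q1 + 2 * μ * q2) * x 0 + -q2 * x 1) +
        x 1 * (-q2 * x 0 + 2 * lam * q2 * x 1) := by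
      have hq : q2 = lam * q1 := by rw [hlam]; field_simp
      rw [hq]
      rcases hx' with h | h
      · nlinarith [mul_pos h1 (sq_pos_of_ne_zero h), sq_nonneg (x 0 - 2 * lam * x 1),
          mul_nonneg h1.le (sq_nonneg (x 0 - 2 * lam * x 1)),
          mul_nonneg (mul_nonneg hμ hlam0.le) (mul_nonneg h1.le (sq_nonneg (x 0)))]
      · nlinarith [mul_pos (mul_pos hlam0 hlam0) (mul_pos h1 (sq_pos_of_ne_zero h)),
          mul_nonneg h1.le (sq_nonneg (x 0 - lam * x 1)),
          mul_nonneg (mul_nonneg hμ hlam0.le) (mul_nonneg h1.le (sq_nonneg (x 0)))]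
    simp only [Matrix.smul_apply, smul_eq_mul, Pi.star_apply, star_trivial,
      Matrix.of_apply, Matrix.cons_val', Matrix.cons_val_zero, Matrix.cons_val_one,
      Matrix.head_cons, Matrix.empty_val', Matrix.cons_val_fin_one, Matrix.head_fin_const]
    have hpos : 0 < 1 / (1 + 4 * lam * μ) := by positivity
    nlinarith [mul_pos hpos key]
end

section
/- Let B₁, B₂, D₁, D₂, R₁, R₂, Q₁, Q₂, Φ₁, Φ₂ be positive real numbers satisfying the ratio conditions Q₂/Q₁ = Φ₂/Φ₁ (call this common value λ) and (B₂²/R₂)/(B₁²/R₁) = (B₂D₂/R₂)/(B₁D₁/R₁) = (D₂B₂/R₂)/(D₁B₁/R₁) = (D₂²/R₂)/(D₁²/R₁) (call this common value μ). Define the 2×2 matrices ℬ₁ = [[B₁²/R₁, B₂²/R₂], [−B₂²/R₂, 0]], ℬ₂ = [[B₁D₁/R₁, B₂D₂/R₂], [−D₂B₂/R₂, 0]], 𝒟₁ = [[D₁B₁/R₁, D₂B₂/R₂], [−B₂D₂/R₂, 0]], 𝒟₂ = [[D₁²/R₁, D₂²/R₂], [−D₂²/R₂, 0]], 𝒬 =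 [[Q₁, −Q₂], [Q₂, 0]], 𝚽 = [[Φ₁, −Φ₂], [Φ₂, 0]], and Υ = [[1, −2μ], [2λ, 1]]. Then Υ is invertible and the six matrices ℬ₁Υ, ℬ₂Υ, 𝒟₁Υ, 𝒟₂Υ, Υ⁻¹𝒬, and Υ⁻¹𝚽 are all symmetric and positive definite. -/
open Matrix

lemma aux_posdef2 (a b c : ℝ) (ha : 0 < a) (hd : 0 < a * c - b ^ 2) :
    (!![a, b; b, c] : Matrix (Fin 2) (Fin 2) ℝ).IsSymm ∧
    (!![a, b; b, c] : Matrix (Fin 2) (Fin 2) ℝ).PosDef := by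
  constructor
  · ext i j; fin_cases i <;> fin_cases j <;> simp [Matrix.IsSymm]
  · refine Matrix.posDef_iff_dotProduct_mulVec.mpr ⟨?_, ?_⟩
    · ext i j; fin_cases i <;> fin_cases j <;> simp [Matrix.IsHermitian]
    · intro x hx
      have h01 : x 0 ≠ 0 ∨ x 1 ≠ 0 := by
        by_contra h
        push_neg at h
        exact hx (funext fun i => by fin_cases i <;> simp [h.1, h.2])
      simp [Matrix.mulVec, dotProduct, Fin.sum_univ_two]
      rcases eq_or_ne (x 1) 0 with h1 | h1
      · have h0 : x 0 ≠ 0 := by tauto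
        have : 0 < x 0 ^ 2 := by positivity
        rw [h1] at *; nlinarith
      · have : 0 < x 1 ^ 2 := by positivity
        nlinarith [sq_nonneg (a * x 0 + b * x 1)]

lemma aux_block (lam μ a b b' : ℝ) (ha : 0 < a) (hb : 0 < b)
    (hlam : 0 < lam) (hμ : 0 < μ) (hab : b = μ * a) (hbb : b' = b) :
    (!![a, b; -b', 0] * !![1, -2 * μ; 2 * lam, 1] : Matrix (Fin 2) (Fin 2) ℝ).IsSymm ∧
    (!![a, b; -b', 0] * !![1, -2 * μ; 2 * lam, 1] : Matrix (Fin 2) (Fin 2) ℝ).PosDef := by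
  rw [hbb]
  have e : (!![a, b; -b, 0] * !![1, -2 * μ; 2 * lam, 1] : Matrix (Fin 2) (Fin 2) ℝ)
      = !![a + 2 * lam * b, -b; -b, 2 * μ * b] := by
    ext i j
    fin_cases i <;> fin_cases j <;>
      simp [Matrix.mul_apply, Fin.sum_univ_two] <;>
      (try ring) <;> (try linear_combination 2 * hab)
  rw [e]
  refine aux_posdef2 _ _ _ (by positivity) ?_
  have h : (a + 2 * lam * b) * (2 * μ * b) - (-b) ^ 2 = b ^ 2 * (1 + 4 * lam * μ) := by
    rw [hab]; ring
  rw [h]; positivity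

lemma aux_inv (lam μ p q : ℝ) (hp : 0 < p) (hq : 0 < q)
    (hlam : 0 < lam) (hμ : 0 < μ) (hpq : q = lam * p) :
    IsUnit (!![1, -2 * μ; 2 * lam, 1] : Matrix (Fin 2) (Fin 2) ℝ) ∧
    ((!![1, -2 * μ; 2 * lam, 1] : Matrix (Fin 2) (Fin 2) ℝ)⁻¹ * !![p, -q; q, 0]).IsSymm ∧
    ((!![1, -2 * μ; 2 * lam, 1] : Matrix (Fin 2) (Fin 2) ℝ)⁻¹ * !![p, -q; q, 0]).PosDef := by
  set d : ℝ := 1 + 4 * lam * μ with hd_def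
  have hd : 0 < d := by positivity
  have hd0 : d ≠ 0 := hd.ne'
  have hW : (!![1, -2 * μ; 2 * lam, 1] : Matrix (Fin 2) (Fin 2) ℝ) *
      !![1 / d, 2 * μ / d; -(2 * lam) / d, 1 / d] = 1 := by
    ext i j
    fin_cases i <;> fin_cases j <;>
      simp [Matrix.mul_apply, Fin.sum_univ_two, Matrix.one_apply] <;>
      field_simp <;> ring
  have hinv : (!![1, -2 * μ; 2 * lam, 1] : Matrix (Fin 2) (Fin 2) ℝ)⁻¹
      = !![1 / d, 2 * μ / d; -(2 * lam) / d, 1 / d] := inv_eq_right_inv hW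
  have hdet : IsUnit (!![1, -2 * μ; 2 * lam, 1] : Matrix (Fin 2) (Fin 2) ℝ).det := by
    rw [Matrix.det_fin_two_of]
    exact isUnit_iff_ne_zero.mpr (by nlinarith)
  refine ⟨(Matrix.isUnit_iff_isUnit_det _).mpr hdet, ?_⟩
  have e : (!![1 / d, 2 * μ / d; -(2 * lam) / d, 1 / d] : Matrix (Fin 2) (Fin 2) ℝ) *
      !![p, -q; q, 0] = !![(p + 2 * μ * q) / d, -(q / d); -(q / d), 2 * lam * q / d] := by
    ext i j
    fin_cases i <;> fin_cases j <;>
      simp [Matrix.mul_apply, Fin.sum_univ_two] <;>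
      rw [hpq] <;> field_simp <;> ring
  rw [hinv, e]
  refine aux_posdef2 _ _ _ (by positivity) ?_
  have h : (p + 2 * μ * q) / d * (2 * lam * q / d) - (-(q / d)) ^ 2 = q ^ 2 / d := by
    rw [hpq]; field_simp; ring
  rw [h]; positivity

/-- under the ratio conditions `Q₂/Q₁ = Φ₂/Φ₁ = λ` and
`(B₂²/R₂)/(B₁²/R₁) = (B₂D₂/R₂)/(B₁D₁/R₁) = (D₂B₂/R₂)/(D₁B₁/R₁) = (D₂²/R₂)/(D₁²/R₁) = μ`,
the transformation `Υ = [[1, −2μ], [2λ, 1]]` is invertible and the matrices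
`ℬ₁Υ, ℬ₂Υ, 𝒟₁Υ, 𝒟₂Υ, Υ⁻¹𝒬, Υ⁻¹𝚽` are all symmetric positive definite. -/
theorem stmt_10 (B1 B2 D1 D2 R1 R2 Q1 Q2 Φ1 Φ2 lam μ : ℝ)
    (hB1 : 0 < B1) (hB2 : 0 < B2) (hD1 : 0 < D1) (hD2 : 0 < D2)
    (hR1 : 0 < R1) (hR2 : 0 < R2) (hQ1 : 0 < Q1) (hQ2 : 0 < Q2)
    (hΦ1 : 0 < Φ1) (hΦ2 : 0 < Φ2)
    (hlam1 : Q2 / Q1 = lam) (hlam2 : Φ2 / Φ1 = lam)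
    (hμ1 : (B2 ^ 2 / R2) / (B1 ^ 2 / R1) = μ)
    (hμ2 : (B2 * D2 / R2) / (B1 * D1 / R1) = μ)
    (hμ3 : (D2 * B2 / R2) / (D1 * B1 / R1) = μ)
    (hμ4 : (D2 ^ 2 / R2) / (D1 ^ 2 / R1) = μ) :
    let Υ : Matrix (Fin 2) (Fin 2) ℝ := !![1, -2 * μ; 2 * lam, 1]
    let calB1 : Matrix (Fin 2) (Fin 2) ℝ := !![B1 ^ 2 / R1, B2 ^ 2 / R2; -(B2 ^ 2 / R2), 0]
    let calB2 : Matrix (Fin 2) (Fin 2) ℝ := !![B1 * D1 / R1, B2 * D2 / R2; -(D2 * B2 / R2), 0]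
    let calD1 : Matrix (Fin 2) (Fin 2) ℝ := !![D1 * B1 / R1, D2 * B2 / R2; -(B2 * D2 / R2), 0]
    let calD2 : Matrix (Fin 2) (Fin 2) ℝ := !![D1 ^ 2 / R1, D2 ^ 2 / R2; -(D2 ^ 2 / R2), 0]
    let calQ : Matrix (Fin 2) (Fin 2) ℝ := !![Q1, -Q2; Q2, 0]
    let calΦ : Matrix (Fin 2) (Fin 2) ℝ := !![Φ1, -Φ2; Φ2, 0]
    IsUnit Υ ∧
    (calB1 * Υ).IsSymm ∧ (calB1 * Υ).PosDef ∧
    (calB2 * Υ).IsSymm ∧ (calB2 * Υ).PosDef ∧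
    (calD1 * Υ).IsSymm ∧ (calD1 * Υ).PosDef ∧
    (calD2 * Υ).IsSymm ∧ (calD2 * Υ).PosDef ∧
    (Υ⁻¹ * calQ).IsSymm ∧ (Υ⁻¹ * calQ).PosDef ∧
    (Υ⁻¹ * calΦ).IsSymm ∧ (Υ⁻¹ * calΦ).PosDef := by
  intro Υ calB1 calB2 calD1 calD2 calQ calΦ
  have hQ1' : (0:ℝ) < Q1 := hQ1
  have hlamp : 0 < lam := hlam1 ▸ div_pos hQ2 hQ1
  have hμp : 0 < μ := hμ1 ▸ div_pos (by positivity) (by positivity)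
  have ha1 : (0:ℝ) < B1 ^ 2 / R1 := by positivity
  have ha2 : (0:ℝ) < B1 * D1 / R1 := by positivity
  have ha3 : (0:ℝ) < D1 * B1 / R1 := by positivity
  have ha4 : (0:ℝ) < D1 ^ 2 / R1 := by positivity
  rw [div_eq_iff ha1.ne'] at hμ1
  rw [div_eq_iff ha2.ne'] at hμ2
  rw [div_eq_iff ha3.ne'] at hμ3
  rw [div_eq_iff ha4.ne'] at hμ4
  rw [div_eq_iff hQ1.ne'] at hlam1
  rw [div_eq_iff hΦ1.ne'] at hlam2
  obtain ⟨hU, hQS, hQP⟩ := aux_inv lam μ Q1 Q2 hQ1 hQ2 hlamp hμp hlam1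
  obtain ⟨_, hΦS, hΦP⟩ := aux_inv lam μ Φ1 Φ2 hΦ1 hΦ2 hlamp hμp hlam2
  obtain ⟨h1S, h1P⟩ := aux_block lam μ (B1 ^ 2 / R1) (B2 ^ 2 / R2) (B2 ^ 2 / R2)
    ha1 (by positivity) hlamp hμp hμ1 rfl
  obtain ⟨h2S, h2P⟩ := aux_block lam μ (B1 * D1 / R1) (B2 * D2 / R2) (D2 * B2 / R2)
    ha2 (by positivity) hlamp hμp hμ2 (by ring)
  obtain ⟨h3S, h3P⟩ := aux_block lam μ (D1 * B1 / R1) (D2 * B2 / R2) (B2 * D2 / R2)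
    ha3 (by positivity) hlamp hμp hμ3 (by ring)
  obtain ⟨h4S, h4P⟩ := aux_block lam μ (D1 ^ 2 / R1) (D2 ^ 2 / R2) (D2 ^ 2 / R2)
    ha4 (by positivity) hlamp hμp hμ4 rfl
  exact ⟨hU, h1S, h1P, h2S, h2P, h3S, h3P, h4S, h4P, hQS, hQP, hΦS, hΦP⟩
end
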